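/- Let n ≥ 2, γ > (n−2)/(n−1), and G = I + γ(J − I) where J is the n×n all-ones matrix. Then G is not (n−1)-incoherent: the matrix X = (n−2)I − (J − I) has all (n−1)×(n−1) principal submatrices PSD (each is diagonally dominant), and Tr(XG) = n(n−2) − n(n−1)γ < 0. -/

import Mathlib

open Matrix BigOperators Finset ComplexOrder

/-- Circulant matrix: entries depend only on `(j - i) mod n`. -/
def IsCirc {n : ℕ} (G : Matrix (Fin n) (Fin n) ℂ) : Prop :=
  ∃ g : Fin n → ℂ, ∀ i j, G i j = g (j - i)

/-- The cyclic shift permutation matrix `P` with `P i j = 1` iff `j = i + 1 (mod n)`. -/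
def cyclicShift (n : ℕ) [NeZero n] : Matrix (Fin n) (Fin n) ℂ :=
  Matrix.of fun i j => if j = i + 1 then 1 else 0

/-- `k`-incoherent PSD matrix. -/
def KIncoherent {n : ℕ} (k : ℕ) (X : Matrix (Fin n) (Fin n) ℂ) : Prop :=
  ∃ (m : ℕ) (c : Fin m → ℝ) (ψ : Fin m → (Fin n → ℂ)),
    (∀ j, 0 ≤ c j) ∧
    (∀ j, (Finset.univ.filter fun i => ψ j i ≠ 0).card ≤ k) ∧
    X = ∑ j, (c j : ℂ) • Matrix.vecMulVec (ψ j) (star (ψ j))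

/-- `(n-1)`-locally PSD: every principal submatrix obtained by deleting one row and the
corresponding column is positive semidefinite. -/
def LocallyPSD {n : ℕ} (Y : Matrix (Fin n) (Fin n) ℂ) : Prop :=
  ∀ i : Fin n,
    Matrix.PosSemidef (Y.submatrix (fun k : {j : Fin n // j ≠ i} => (k : Fin n))
      (fun k : {j : Fin n // j ≠ i} => (k : Fin n)))

/-- The (unitary) discrete Fourier transform matrix. -/
noncomputable def dftMatrix (n : ℕ) : Matrix (Fin n) (Fin n) ℂ :=
  Matrix.of fun j k =>
    Complex.exp (2 * Real.pi * Complex.I * (j.val * k.val) / n) / Real.sqrt n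

lemma aux_conj_mul_self (z : ℂ) : (starRingEnd ℂ) z * z = (‖z‖^2 : ℝ) := by
  rw [mul_comm, Complex.mul_conj, Complex.normSq_eq_norm_sq]

lemma aux_cs {ι : Type*} (S : Finset ι) (f : ι → ℂ) :
    ‖∑ k ∈ S, f k‖^2 ≤ (S.card : ℝ) * ∑ k ∈ S, ‖f k‖^2 := by
  calc ‖∑ k ∈ S, f k‖^2 ≤ (∑ k ∈ S, ‖f k‖)^2 :=
        pow_le_pow_left₀ (norm_nonneg _) (norm_sum_le _ _) 2
    _ ≤ (S.card : ℝ) * ∑ k ∈ S, ‖f k‖^2 := sq_sum_le_card_mul_sum_sq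

lemma aux_form_eq {ι : Type*} [Fintype ι] [DecidableEq ι] (a : ℂ) (x : ι → ℂ) :
    ∑ k, ∑ l, (starRingEnd ℂ) (x k) * ((if k = l then a - 1 else -1) * x l)
      = a * ∑ k, ((‖x k‖^2 : ℝ) : ℂ) - ((‖∑ k, x k‖^2 : ℝ) : ℂ) := by
  have h : ∀ k l : ι, (starRingEnd ℂ) (x k) * ((if k = l then a - 1 else -1) * x l)
      = (if l = k then a * ((starRingEnd ℂ) (x k) * x l) else 0)
        - (starRingEnd ℂ) (x k) * x l := by
    intro k l
    rcases eq_or_ne k l with rfl | hkl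
    · rw [if_pos rfl, if_pos rfl]; ring
    · rw [if_neg hkl, if_neg (Ne.symm hkl)]; ring
  simp_rw [h, Finset.sum_sub_distrib, Finset.sum_ite_eq', Finset.mem_univ, if_true]
  rw [← Finset.mul_sum, ← Finset.sum_mul_sum]
  have h2 : ∀ k : ι, (starRingEnd ℂ) (x k) * x k = ((‖x k‖^2 : ℝ) : ℂ) :=
    fun k => aux_conj_mul_self _
  simp_rw [h2]
  rw [← map_sum, aux_conj_mul_self]

lemma aux_form_nonneg {ι : Type*} [Fintype ι] [DecidableEq ι] (a : ℝ) (ha0 : 0 ≤ a)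
    (x : ι → ℂ)
    (ha : (((Finset.univ.filter fun k => x k ≠ 0) : Finset ι).card : ℝ) ≤ a) :
    0 ≤ ∑ k, ∑ l, (starRingEnd ℂ) (x k) * ((if k = l then (a:ℂ) - 1 else -1) * x l) := by
  rw [aux_form_eq]
  have key : ‖∑ k, x k‖^2 ≤ a * ∑ k, ‖x k‖^2 := by
    have h1 : ∑ k, x k = ∑ k ∈ Finset.univ.filter (fun k => x k ≠ 0), x k :=
      (Finset.sum_filter_ne_zero _).symm
    calc ‖∑ k, x k‖^2 = ‖∑ k ∈ Finset.univ.filter (fun k => x k ≠ 0), x k‖^2 := by rw [h1]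
      _ ≤ ((Finset.univ.filter (fun k => x k ≠ 0)).card : ℝ) *
            ∑ k ∈ Finset.univ.filter (fun k => x k ≠ 0), ‖x k‖^2 := aux_cs _ _
      _ ≤ a * ∑ k ∈ Finset.univ.filter (fun k => x k ≠ 0), ‖x k‖^2 :=
            mul_le_mul_of_nonneg_right ha
              (Finset.sum_nonneg fun _ _ => sq_nonneg _)
      _ ≤ a * ∑ k, ‖x k‖^2 :=
            mul_le_mul_of_nonneg_left
              (Finset.sum_le_sum_of_subset_of_nonneg (Finset.subset_univ _)
                (fun _ _ _ => sq_nonneg _)) ha0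
  have h2 : (a:ℂ) * ∑ k, ((‖x k‖^2 : ℝ) : ℂ) - ((‖∑ k, x k‖^2 : ℝ) : ℂ)
      = ((a * ∑ k, ‖x k‖^2 - ‖∑ k, x k‖^2 : ℝ) : ℂ) := by push_cast; ring
  rw [h2, Complex.zero_le_real]
  linarith

theorem stmt11 {n : ℕ} (hn : 2 ≤ n) (γ : ℝ)
    (hγ : ((n : ℝ) - 2) / ((n : ℝ) - 1) < γ)
    (G : Matrix (Fin n) (Fin n) ℂ)
    (hG : G = 1 + (γ : ℂ) • (Matrix.of (fun _ _ => (1 : ℂ)) - 1))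
    (X : Matrix (Fin n) (Fin n) ℂ)
    (hX : X = ((n : ℂ) - 2) • 1 - (Matrix.of (fun _ _ => (1 : ℂ)) - 1)) :
    LocallyPSD X ∧
    (X * G).trace = (n : ℂ) * ((n : ℂ) - 2) - (n : ℂ) * ((n : ℂ) - 1) * (γ : ℂ) ∧
    ¬ KIncoherent (n - 1) G := by
  have hn2 : (2:ℝ) ≤ (n:ℝ) := by exact_mod_cast hn
  set a : ℝ := (n:ℝ) - 1 with ha_def
  have ha0 : 0 ≤ a := by simp only [ha_def]; linarith
  have haC : ((a:ℝ) : ℂ) = (n:ℂ) - 1 := by rw [ha_def]; push_cast; ring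
  have hXe : ∀ i j, X i j = if i = j then ((a:ℝ):ℂ) - 1 else -1 := by
    intro i j
    simp only [hX, Matrix.sub_apply, Matrix.smul_apply, Matrix.of_apply,
      Matrix.one_apply, smul_eq_mul, haC]
    by_cases h : i = j <;> simp [h] <;> ring
  have hGe : ∀ i j, G i j = if i = j then 1 else (γ:ℂ) := by
    intro i j
    simp only [hG, Matrix.add_apply, Matrix.smul_apply, Matrix.sub_apply,
      Matrix.of_apply, Matrix.one_apply, smul_eq_mul]
    by_cases h : i = j <;> simp [h]
  -- trace computation
  have htr : (X * G).trace = (n : ℂ) * ((n : ℂ) - 2) - (n : ℂ) * ((n : ℂ) - 1) * (γ : ℂ) := by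
    have h1 : (X * G).trace = ∑ i, ∑ j, X i j * G j i := by
      simp [Matrix.trace, Matrix.mul_apply, Matrix.diag]
    rw [h1]
    have h2 : ∀ i : Fin n, ∑ j, X i j * G j i = ((n:ℂ) - 2) + ((n:ℕ) - 1 : ℕ) * (-(γ:ℂ)) := by
      intro i
      have h3 : ∀ j, X i j * G j i = if i = j then ((n:ℂ) - 2) else -(γ:ℂ) := by
        intro j
        rw [hXe, hGe]
        by_cases h : i = j
        · rw [if_pos h, if_pos h.symm, if_pos h, haC]; ring
        · rw [if_neg h, if_neg (Ne.symm h), if_neg h]; ring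
      simp_rw [h3]
      rw [← Finset.add_sum_erase _ _ (Finset.mem_univ i), if_pos rfl]
      congr 1
      rw [Finset.sum_congr rfl (fun j hj => if_neg (Ne.symm (Finset.ne_of_mem_erase hj))),
        Finset.sum_const, Finset.card_erase_of_mem (Finset.mem_univ i), Finset.card_univ,
        Fintype.card_fin, nsmul_eq_mul]
    simp_rw [h2]
    rw [Finset.sum_const, Finset.card_univ, Fintype.card_fin, nsmul_eq_mul]
    have : ((n - 1 : ℕ) : ℂ) = (n:ℂ) - 1 := by
      push_cast [Nat.cast_sub (by omega : 1 ≤ n)]; ring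
    rw [this]; ring
  refine ⟨?_, htr, ?_⟩
  · -- LocallyPSD
    intro i
    rw [Matrix.posSemidef_iff_dotProduct_mulVec]
    constructor
    · ext k l
      rw [Matrix.conjTranspose_apply, Matrix.submatrix_apply, Matrix.submatrix_apply,
        hXe, hXe]
      by_cases h : (l : Fin n) = (k : Fin n)
      · rw [if_pos h, if_pos h.symm, haC]
        simp
      · rw [if_neg h, if_neg (Ne.symm h)]
        simp
    · intro x
      have hform : star x ⬝ᵥ (X.submatrix (fun k : {j : Fin n // j ≠ i} => (k : Fin n))
            (fun k : {j : Fin n // j ≠ i} => (k : Fin n))) *ᵥ x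
          = ∑ k, ∑ l, (starRingEnd ℂ) (x k) * ((if k = l then (a:ℂ) - 1 else -1) * x l) := by
        simp only [dotProduct, Matrix.mulVec, Pi.star_apply, Complex.star_def,
          Finset.mul_sum, dotProduct, Matrix.submatrix_apply]
        refine Finset.sum_congr rfl fun k _ => Finset.sum_congr rfl fun l _ => ?_
        rw [hXe]
        by_cases h : k = l
        · rw [if_pos (by rw [h]), if_pos h]
        · rw [if_neg (fun hh => h (Subtype.coe_injective hh)), if_neg h]
      rw [hform]
      apply aux_form_nonneg a ha0 x
      calc (((Finset.univ.filter fun k => x k ≠ 0)).card : ℝ)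
          ≤ ((Finset.univ : Finset {j : Fin n // j ≠ i}).card : ℝ) := by
            exact_mod_cast Finset.card_le_card (Finset.filter_subset _ _)
        _ ≤ a := by
            rw [Finset.card_univ, Fintype.card_subtype_compl]
            simp only [Fintype.card_fin, Fintype.card_subtype_eq]
            rw [ha_def]
            rw [Nat.cast_sub (by omega : 1 ≤ n)]
            simp
  · -- not KIncoherent
    rintro ⟨m, c, ψ, hc, hsupp, hGeq⟩
    have hpos : 0 ≤ (X * G).trace := by
      rw [hGeq, Matrix.mul_sum, Matrix.trace_sum]
      apply Finset.sum_nonneg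
      intro j _
      rw [Matrix.mul_smul, Matrix.trace_smul, smul_eq_mul]
      apply mul_nonneg (Complex.zero_le_real.mpr (hc j))
      have hform : (X * Matrix.vecMulVec (ψ j) (star (ψ j))).trace
          = ∑ k, ∑ l, (starRingEnd ℂ) (ψ j k) *
              ((if k = l then (a:ℂ) - 1 else -1) * ψ j l) := by
        simp only [Matrix.trace, Matrix.diag, Matrix.mul_apply, Matrix.vecMulVec_apply,
          Pi.star_apply, Complex.star_def]
        refine Finset.sum_congr rfl fun k _ => Finset.sum_congr rfl fun l _ => ?_
        rw [hXe]; ring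
      rw [hform]
      apply aux_form_nonneg a ha0 (ψ j)
      calc (((Finset.univ.filter fun k => ψ j k ≠ 0)).card : ℝ)
          ≤ ((n - 1 : ℕ) : ℝ) := by exact_mod_cast hsupp j
        _ ≤ a := by
            rw [ha_def, Nat.cast_sub (by omega : 1 ≤ n)]; simp
    rw [htr] at hpos
    have heq : (n : ℂ) * ((n : ℂ) - 2) - (n : ℂ) * ((n : ℂ) - 1) * (γ : ℂ)
        = (((n:ℝ) * ((n:ℝ) - 2) - (n:ℝ) * ((n:ℝ) - 1) * γ : ℝ) : ℂ) := by
      push_cast; ring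
    rw [heq, Complex.zero_le_real] at hpos
    have hd : (n:ℝ) - 2 < γ * ((n:ℝ) - 1) := by
      have hpos1 : (0:ℝ) < a := by rw [ha_def]; linarith
      have h5 := (div_lt_iff₀ hpos1).mp hγ
      rw [ha_def] at h5
      linarith
    nlinarith
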